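/- Consider the recursion R_0 = {0}, R_{i+1} = [A B]·{(w,α) : w ∈ R_i, Cw + Dα = 0} for the strongly reachable subspace. For every i ≥ 1, R_i equals the image of the matrix [B AB ... A^{i-1}B]·N̂_i, where the columns of N̂_i form a basis of ker M_i, the kernel of the i-th Markov parameter matrix. Equivalently, R_i = { [B AB ... A^{i-1}B] v : v ∈ ker M_i }. -/

import Mathlib

open Matrix

noncomputable def Markov {n m p : ℕ} (A : Matrix (Fin n) (Fin n) ℝ) (B : Matrix (Fin n) (Fin m) ℝ)
    (C : Matrix (Fin p) (Fin n) ℝ) (D : Matrix (Fin p) (Fin m) ℝ) (k : ℕ) :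
    Matrix (Fin k × Fin p) (Fin k × Fin m) ℝ :=
  fun ir jc =>
    if (ir.1 : ℕ) + (jc.1 : ℕ) + 1 < k then 0
    else if (ir.1 : ℕ) + (jc.1 : ℕ) + 1 = k then D ir.2 jc.2
    else (C * A ^ ((ir.1 : ℕ) + (jc.1 : ℕ) - k) * B) ir.2 jc.2

/-- The recursion computing the strongly reachable subspace:
`R₀ = {0}`, `R_{i+1} = [A B]·{(w,α) : w ∈ Rᵢ, Cw + Dα = 0}`. -/
def strongRec {n m p : ℕ} (A : Matrix (Fin n) (Fin n) ℝ) (B : Matrix (Fin n) (Fin m) ℝ)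
    (C : Matrix (Fin p) (Fin n) ℝ) (D : Matrix (Fin p) (Fin m) ℝ) : ℕ → Set (Fin n → ℝ)
  | 0 => {0}
  | (i + 1) => {x | ∃ w α, w ∈ strongRec A B C D i ∧ C.mulVec w + D.mulVec α = 0 ∧
      x = A.mulVec w + B.mulVec α}

namespace StrongAux

variable {n m p : ℕ} (A : Matrix (Fin n) (Fin n) ℝ) (B : Matrix (Fin n) (Fin m) ℝ)
  (C : Matrix (Fin p) (Fin n) ℝ) (D : Matrix (Fin p) (Fin m) ℝ)

noncomputable def ctrb (k : ℕ) : Matrix (Fin n) (Fin k × Fin m) ℝ :=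
  Matrix.of fun r jc => (A ^ (jc.1 : ℕ) * B) r jc.2

def cons {k : ℕ} (α : Fin m → ℝ) (v : Fin k × Fin m → ℝ) : Fin (k+1) × Fin m → ℝ :=
  fun jc => Fin.cases (α jc.2) (fun j => v (j, jc.2)) jc.1

@[simp] lemma cons_zero {k : ℕ} (α : Fin m → ℝ) (v : Fin k × Fin m → ℝ) (c : Fin m) :
    cons α v (0, c) = α c := rfl

@[simp] lemma cons_succ {k : ℕ} (α : Fin m → ℝ) (v : Fin k × Fin m → ℝ) (j : Fin k) (c : Fin m) :
    cons α v (j.succ, c) = v (j, c) := rfl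

lemma cons_eta {k : ℕ} (v : Fin (k+1) × Fin m → ℝ) :
    cons (fun c => v (0, c)) (fun jc => v (jc.1.succ, jc.2)) = v := by
  funext jc
  obtain ⟨j, c⟩ := jc
  induction j using Fin.cases with
  | zero => rfl
  | succ j => rfl

lemma markov_shift {k : ℕ} (r : Fin k) (row : Fin p) (j : Fin k) (c : Fin m) :
    Markov A B C D (k+1) (r.castSucc, row) (j.succ, c) = Markov A B C D k (r, row) (j, c) := by
  simp only [Markov, Fin.coe_castSucc, Fin.val_succ]
  have h3 : (r : ℕ) + ((j : ℕ) + 1) - (k + 1) = (r : ℕ) + (j : ℕ) - k := by omega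
  rw [h3]
  split_ifs <;> first | rfl | omega

lemma markov_cast_zero {k : ℕ} (r : Fin k) (row : Fin p) (c : Fin m) :
    Markov A B C D (k+1) (r.castSucc, row) ((0 : Fin (k+1)), c) = 0 := by
  have hr := r.isLt
  simp only [Markov, Fin.coe_castSucc, Fin.val_zero]
  exact if_pos (by omega)

lemma markov_last_zero {k : ℕ} (row : Fin p) (c : Fin m) :
    Markov A B C D (k+1) (Fin.last k, row) ((0 : Fin (k+1)), c) = D row c := by
  simp only [Markov, Fin.val_last, Fin.val_zero]
  split_ifs <;> first | rfl | omega

lemma markov_last_succ {k : ℕ} (row : Fin p) (j : Fin k) (c : Fin m) :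
    Markov A B C D (k+1) (Fin.last k, row) (j.succ, c) = (C * A ^ (j : ℕ) * B) row c := by
  simp only [Markov, Fin.val_last, Fin.val_succ]
  have h3 : k + ((j : ℕ) + 1) - (k + 1) = (j : ℕ) := by omega
  rw [h3]
  split_ifs <;> first | rfl | omega

lemma mul_ctrb_apply {k : ℕ} (r : Fin n) (j : Fin k) (c : Fin m) :
    (A * ctrb A B k) r (j, c) = (A ^ ((j : ℕ) + 1) * B) r c := by
  rw [pow_succ', Matrix.mul_assoc]
  simp [Matrix.mul_apply, ctrb]

lemma ctrb_succ_mulVec {k : ℕ} (α : Fin m → ℝ) (v : Fin k × Fin m → ℝ) :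
    (ctrb A B (k+1)).mulVec (cons α v) = B.mulVec α + A.mulVec ((ctrb A B k).mulVec v) := by
  funext r
  rw [Pi.add_apply, Matrix.mulVec_mulVec]
  simp only [ctrb, Matrix.mulVec, dotProduct, Fintype.sum_prod_type, Fin.sum_univ_succ,
    Matrix.of_apply, cons_zero, cons_succ, Fin.val_zero, Fin.val_succ, pow_zero, Matrix.one_mul]
  congr 1
  refine Finset.sum_congr rfl fun j _ => Finset.sum_congr rfl fun c _ => ?_
  show (A ^ ((j : ℕ) + 1) * B) r c * v (j, c) = (A * ctrb A B k) r (j, c) * v (j, c)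
  rw [mul_ctrb_apply]

lemma ctrbC_apply {k : ℕ} (row : Fin p) (j : Fin k) (c : Fin m) :
    (C * ctrb A B k) row (j, c) = (C * A ^ (j : ℕ) * B) row c := by
  rw [Matrix.mul_assoc]
  simp [Matrix.mul_apply, ctrb]

lemma markov_mulVec_castSucc {k : ℕ} (α : Fin m → ℝ) (v : Fin k × Fin m → ℝ)
    (r : Fin k) (row : Fin p) :
    ((Markov A B C D (k+1)).mulVec (cons α v)) (r.castSucc, row)
      = ((Markov A B C D k).mulVec v) (r, row) := by
  simp only [Matrix.mulVec, dotProduct, Fintype.sum_prod_type, Fin.sum_univ_succ,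
    cons_zero, cons_succ, markov_cast_zero, markov_shift, zero_mul, Finset.sum_const_zero,
    zero_add]

lemma markov_mulVec_last {k : ℕ} (α : Fin m → ℝ) (v : Fin k × Fin m → ℝ) (row : Fin p) :
    ((Markov A B C D (k+1)).mulVec (cons α v)) (Fin.last k, row)
      = (C.mulVec ((ctrb A B k).mulVec v)) row + (D.mulVec α) row := by
  rw [Matrix.mulVec_mulVec]
  simp only [Matrix.mulVec, dotProduct, Fintype.sum_prod_type, Fin.sum_univ_succ,
    cons_zero, cons_succ, markov_last_zero, markov_last_succ]
  rw [add_comm]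
  congr 1
  refine Finset.sum_congr rfl fun j _ => Finset.sum_congr rfl fun c _ => ?_
  rw [ctrbC_apply]

lemma aux (i : ℕ) :
    strongRec A B C D i =
      {x | ∃ v : Fin i × Fin m → ℝ, (Markov A B C D i).mulVec v = 0 ∧
        x = (ctrb A B i).mulVec v} := by
  induction i with
  | zero =>
    ext x
    simp only [strongRec, Set.mem_singleton_iff, Set.mem_setOf_eq]
    constructor
    · rintro rfl
      refine ⟨fun _ => 0, ?_, ?_⟩
      · funext ir
        exact ir.1.elim0
      · funext r
        simp [ctrb, Matrix.mulVec, dotProduct, Finset.univ_eq_empty]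
    · rintro ⟨v, -, rfl⟩
      funext r
      simp [ctrb, Matrix.mulVec, dotProduct, Finset.univ_eq_empty]
  | succ k ih =>
    ext x
    simp only [strongRec, Set.mem_setOf_eq]
    constructor
    · rintro ⟨w, α, hw, hCD, rfl⟩
      rw [ih] at hw
      obtain ⟨v, hMv, rfl⟩ := hw
      refine ⟨cons α v, ?_, ?_⟩
      · funext ir
        obtain ⟨r, row⟩ := ir
        induction r using Fin.lastCases with
        | last =>
          rw [markov_mulVec_last]
          simpa using congrFun hCD row
        | cast r =>
          rw [markov_mulVec_castSucc]
          simpa using congrFun hMv (r, row)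
      · rw [ctrb_succ_mulVec, add_comm]
    · rintro ⟨v', hM, rfl⟩
      set α : Fin m → ℝ := fun c => v' (0, c) with hα
      set v : Fin k × Fin m → ℝ := fun jc => v' (jc.1.succ, jc.2) with hv
      have hcons : cons α v = v' := cons_eta v'
      rw [← hcons] at hM
      refine ⟨(ctrb A B k).mulVec v, α, ?_, ?_, ?_⟩
      · rw [ih]
        refine ⟨v, ?_, rfl⟩
        funext ir
        obtain ⟨r, row⟩ := ir
        have h := congrFun hM (r.castSucc, row)
        rw [markov_mulVec_castSucc] at h
        simpa using h
      · funext row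
        have h := congrFun hM (Fin.last k, row)
        rw [markov_mulVec_last] at h
        simpa using h
      · rw [← hcons, ctrb_succ_mulVec, add_comm]

end StrongAux

/-- For every `i ≥ 1`, the `i`-th step of the strong-reachability recursion
equals `[B AB … A^{i-1}B](ker Mᵢ)`, where `Mᵢ` is the Markov parameter
matrix. -/
theorem strongRec_eq_ctrb_kernel {n m p : ℕ} (A : Matrix (Fin n) (Fin n) ℝ)
    (B : Matrix (Fin n) (Fin m) ℝ) (C : Matrix (Fin p) (Fin n) ℝ)
    (D : Matrix (Fin p) (Fin m) ℝ) :
    ∀ i : ℕ, 1 ≤ i →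
      strongRec A B C D i =
        {x | ∃ v : Fin i × Fin m → ℝ, (Markov A B C D i).mulVec v = 0 ∧
          x = (Matrix.of fun (r : Fin n) (jc : Fin i × Fin m) =>
                (A ^ (jc.1 : ℕ) * B) r jc.2).mulVec v} := by
  intro i _
  exact StrongAux.aux A B C D i
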